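/- Let m : ℕ and let V ⊆ (Fin m → ZMod 2) be a doubly even code spanned by linearly independent vectors v₁, v₂, v₃ such that: |v_i| ≡ 4 (mod 8) for i = 1,2,3; |supp v_i ∩ supp v_j| ≡ 0 (mod 4) for 1 ≤ i < j ≤ 3; |supp v₁ ∩ supp v₂ ∩ supp v₃| is odd; and every coordinate k ∈ Fin m lies in the support of some element of V. Then m ≥ 17, and if m = 17 then some permutation of the 17 coordinates maps V onto the code spanned by the indicator vectors of {1,...,12}, {1,...,8,13,14,15,16} and {1,2,3,4,5,9,10,11,13,14,15,17}. -/

import Mathlib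

set_option linter.unreachableTactic false
set_option linter.unusedTactic false


/-- The support of a vector in `F₂^m`, as a finset of coordinates. -/
def supp {m : ℕ} (v : Fin m → ZMod 2) : Finset (Fin m) :=
  Finset.univ.filter fun k => v k ≠ 0

/-- The indicator vector in `F₂^m` of a set of (1-based) coordinate labels. -/
def indVec {m : ℕ} (S : Finset ℕ) : Fin m → ZMod 2 :=
  fun k => if (k : ℕ) + 1 ∈ S then 1 else 0

/-- The linear automorphism of `F₂^m` permuting coordinates by `π`. -/
def permMap {m : ℕ} (π : Equiv.Perm (Fin m)) :
    (Fin m → ZMod 2) →ₗ[ZMod 2] (Fin m → ZMod 2) where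
  toFun v := v ∘ π
  map_add' _ _ := rfl
  map_smul' _ _ := rfl


abbrev Pat : Type := ZMod 2 × ZMod 2 × ZMod 2

def pat {m : ℕ} (v₁ v₂ v₃ : Fin m → ZMod 2) (k : Fin m) : Pat := (v₁ k, v₂ k, v₃ k)

lemma card_filter_pat {m : ℕ} (v₁ v₂ v₃ : Fin m → ZMod 2) (Q : Pat → Prop) [DecidablePred Q] :
    (Finset.univ.filter fun k => Q (pat v₁ v₂ v₃ k)).card
      = ∑ p : Pat, if Q p then (Finset.univ.filter fun k => pat v₁ v₂ v₃ k = p).card else 0 := by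
  rw [← Finset.sum_filter]
  rw [Finset.card_eq_sum_card_fiberwise (f := pat v₁ v₂ v₃) (t := Finset.univ.filter Q)
      (fun k hk => by simpa using (Finset.mem_filter.mp hk).2)]
  refine Finset.sum_congr rfl fun p hp => ?_
  have hQ : Q p := (Finset.mem_filter.mp hp).2
  congr 1
  ext k
  simp only [Finset.mem_filter, Finset.mem_univ, true_and]
  exact ⟨fun h => h.2, fun h => ⟨h ▸ hQ, h⟩⟩

lemma sum_pat (f : Pat → ℕ) :
    ∑ p : Pat, f p = f (0,0,0) + f (0,0,1) + f (0,1,0) + f (0,1,1)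
      + f (1,0,0) + f (1,0,1) + f (1,1,0) + f (1,1,1) := by
  have huniv : (Finset.univ : Finset Pat)
      = {(0,0,0),(0,0,1),(0,1,0),(0,1,1),(1,0,0),(1,0,1),(1,1,0),(1,1,1)} := by decide
  rw [huniv]
  repeat rw [Finset.sum_insert (by decide)]
  rw [Finset.sum_singleton]
  ring

/-- Theorem 4.4, case of `C₅³` (characteristic vector `(111000)`): a doubly even
code realizing `C₅³` has degree at least 17, and in degree 17 it is, up to a
permutation of coordinates, the basic representation given in the paper. -/
theorem stmt16 (m : ℕ) (v₁ v₂ v₃ : Fin m → ZMod 2)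
    (hli : LinearIndependent (ZMod 2) ![v₁, v₂, v₃])
    (hde4 : ∀ v ∈ Submodule.span (ZMod 2) ({v₁, v₂, v₃} : Set (Fin m → ZMod 2)),
      (supp v).card % 4 = 0)
    (hde2 : ∀ u ∈ Submodule.span (ZMod 2) ({v₁, v₂, v₃} : Set (Fin m → ZMod 2)),
      ∀ v ∈ Submodule.span (ZMod 2) ({v₁, v₂, v₃} : Set (Fin m → ZMod 2)),
      (supp u ∩ supp v).card % 2 = 0)
    (h1 : (supp v₁).card % 8 = 4) (h2 : (supp v₂).card % 8 = 4)
    (h3 : (supp v₃).card % 8 = 4)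
    (h12 : (supp v₁ ∩ supp v₂).card % 4 = 0)
    (h13 : (supp v₁ ∩ supp v₃).card % 4 = 0)
    (h23 : (supp v₂ ∩ supp v₃).card % 4 = 0)
    (h123 : Odd (supp v₁ ∩ supp v₂ ∩ supp v₃).card)
    (hcov : ∀ k : Fin m, ∃ v ∈ Submodule.span (ZMod 2)
      ({v₁, v₂, v₃} : Set (Fin m → ZMod 2)), v k ≠ 0) :
    17 ≤ m ∧ (m = 17 → ∃ π : Equiv.Perm (Fin m),
      Submodule.map (permMap π)
          (Submodule.span (ZMod 2) ({v₁, v₂, v₃} : Set (Fin m → ZMod 2))) =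
        Submodule.span (ZMod 2) ({indVec {1, 2, 3, 4, 5, 6, 7, 8, 9, 10, 11, 12}, indVec {1, 2, 3, 4, 5, 6, 7, 8, 13, 14, 15, 16},
          indVec {1, 2, 3, 4, 5, 9, 10, 11, 13, 14, 15, 17}} : Set (Fin m → ZMod 2))) := by
  classical
  obtain ⟨n, hn⟩ : ∃ n : Pat → ℕ,
      ∀ p, (Finset.univ.filter fun k => pat v₁ v₂ v₃ k = p).card = n p := ⟨_, fun _ => rfl⟩
  have c1 : (supp v₁).card = n (1,0,0) + n (1,0,1) + n (1,1,0) + n (1,1,1) := by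
    have h := card_filter_pat v₁ v₂ v₃ (fun p => p.1 ≠ 0)
    rw [sum_pat] at h
    simp only [hn] at h
    rw [if_neg (by decide), if_neg (by decide), if_neg (by decide), if_neg (by decide),
      if_pos (by decide), if_pos (by decide), if_pos (by decide), if_pos (by decide)] at h
    simp only [zero_add, add_zero] at h
    rw [← h]
    all_goals congr 1
    all_goals ext k
    all_goals simp [supp, pat]
  have c2 : (supp v₂).card = n (0,1,0) + n (0,1,1) + n (1,1,0) + n (1,1,1) := by
    have h := card_filter_pat v₁ v₂ v₃ (fun p => p.2.1 ≠ 0)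
    rw [sum_pat] at h
    simp only [hn] at h
    rw [if_neg (by decide), if_neg (by decide), if_pos (by decide), if_pos (by decide),
      if_neg (by decide), if_neg (by decide), if_pos (by decide), if_pos (by decide)] at h
    simp only [zero_add, add_zero] at h
    rw [← h]
    all_goals congr 1
    all_goals ext k
    all_goals simp [supp, pat]
  have c3 : (supp v₃).card = n (0,0,1) + n (0,1,1) + n (1,0,1) + n (1,1,1) := by
    have h := card_filter_pat v₁ v₂ v₃ (fun p => p.2.2 ≠ 0)
    rw [sum_pat] at h
    simp only [hn] at h
    rw [if_neg (by decide), if_pos (by decide), if_neg (by decide), if_pos (by decide),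
      if_neg (by decide), if_pos (by decide), if_neg (by decide), if_pos (by decide)] at h
    simp only [zero_add, add_zero] at h
    rw [← h]
    all_goals congr 1
    all_goals ext k
    all_goals simp [supp, pat]
  have c12 : (supp v₁ ∩ supp v₂).card = n (1,1,0) + n (1,1,1) := by
    have h := card_filter_pat v₁ v₂ v₃ (fun p => p.1 ≠ 0 ∧ p.2.1 ≠ 0)
    rw [sum_pat] at h
    simp only [hn] at h
    rw [if_neg (by decide), if_neg (by decide), if_neg (by decide), if_neg (by decide),
      if_neg (by decide), if_neg (by decide), if_pos (by decide), if_pos (by decide)] at h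
    simp only [zero_add, add_zero] at h
    rw [← h]
    all_goals congr 1
    all_goals ext k
    all_goals simp [supp, pat]
    all_goals exact ⟨fun h => Finset.mem_filter.mpr ⟨Finset.mem_univ _, h⟩, fun h => (Finset.mem_filter.mp h).2⟩
  have c13 : (supp v₁ ∩ supp v₃).card = n (1,0,1) + n (1,1,1) := by
    have h := card_filter_pat v₁ v₂ v₃ (fun p => p.1 ≠ 0 ∧ p.2.2 ≠ 0)
    rw [sum_pat] at h
    simp only [hn] at h
    rw [if_neg (by decide), if_neg (by decide), if_neg (by decide), if_neg (by decide),
      if_neg (by decide), if_pos (by decide), if_neg (by decide), if_pos (by decide)] at h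
    simp only [zero_add, add_zero] at h
    rw [← h]
    all_goals congr 1
    all_goals ext k
    all_goals simp [supp, pat]
    all_goals exact ⟨fun h => Finset.mem_filter.mpr ⟨Finset.mem_univ _, h⟩, fun h => (Finset.mem_filter.mp h).2⟩
  have c23 : (supp v₂ ∩ supp v₃).card = n (0,1,1) + n (1,1,1) := by
    have h := card_filter_pat v₁ v₂ v₃ (fun p => p.2.1 ≠ 0 ∧ p.2.2 ≠ 0)
    rw [sum_pat] at h
    simp only [hn] at h
    rw [if_neg (by decide), if_neg (by decide), if_neg (by decide), if_pos (by decide),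
      if_neg (by decide), if_neg (by decide), if_neg (by decide), if_pos (by decide)] at h
    simp only [zero_add, add_zero] at h
    rw [← h]
    all_goals congr 1
    all_goals ext k
    all_goals simp [supp, pat]
    all_goals exact ⟨fun h => Finset.mem_filter.mpr ⟨Finset.mem_univ _, h⟩, fun h => (Finset.mem_filter.mp h).2⟩
  have c123 : (supp v₁ ∩ supp v₂ ∩ supp v₃).card = n (1,1,1) := by
    have h := card_filter_pat v₁ v₂ v₃ (fun p => p.1 ≠ 0 ∧ p.2.1 ≠ 0 ∧ p.2.2 ≠ 0)
    rw [sum_pat] at h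
    simp only [hn] at h
    rw [if_neg (by decide), if_neg (by decide), if_neg (by decide), if_neg (by decide),
      if_neg (by decide), if_neg (by decide), if_neg (by decide), if_pos (by decide)] at h
    simp only [zero_add, add_zero] at h
    rw [← h]
    all_goals congr 1
    all_goals ext k
    all_goals simp [supp, pat, and_assoc]
    all_goals exact ⟨fun h => Finset.mem_filter.mpr ⟨Finset.mem_univ _, h⟩, fun h => (Finset.mem_filter.mp h).2⟩
  have cm : m = n (0,0,0) + n (0,0,1) + n (0,1,0) + n (0,1,1)
      + n (1,0,0) + n (1,0,1) + n (1,1,0) + n (1,1,1) := by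
    have h := card_filter_pat v₁ v₂ v₃ (fun _ => True)
    rw [sum_pat] at h
    simp only [hn, if_true] at h
    rw [← h]
    rw [show (Finset.univ.filter fun _ : Fin m => True) = Finset.univ from Finset.filter_true _]
    simp
  have c0 : n (0,0,0) = 0 := by
    rw [← hn]
    rw [Finset.card_eq_zero, Finset.filter_eq_empty_iff]
    intro k _ hk
    have h1k : v₁ k = 0 := congrArg (fun p : Pat => p.1) hk
    have h2k : v₂ k = 0 := congrArg (fun p : Pat => p.2.1) hk
    have h3k : v₃ k = 0 := congrArg (fun p : Pat => p.2.2) hk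
    obtain ⟨v, hv, hvk⟩ := hcov k
    apply hvk
    clear hvk
    induction hv using Submodule.span_induction with
    | mem x hx => rcases hx with rfl | rfl | rfl <;> assumption
    | zero => rfl
    | add x y _ _ hx hy => simp [hx, hy]
    | smul a x _ hx => simp [hx]
  rw [c1] at h1; rw [c2] at h2; rw [c3] at h3
  rw [c12] at h12; rw [c13] at h13; rw [c23] at h23
  rw [c123, Nat.odd_iff] at h123
  refine ⟨by omega, fun hm => ?_⟩
  subst hm
  -- exact cell sizes
  have gG : n (1,1,1) = 5 := by omega
  have gD : n (1,1,0) = 3 := by omega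
  have gE : n (1,0,1) = 3 := by omega
  have gF : n (0,1,1) = 3 := by omega
  have gA : n (1,0,0) = 1 := by omega
  have gB : n (0,1,0) = 1 := by omega
  have gC : n (0,0,1) = 1 := by omega
  set w₁ : Fin 17 → ZMod 2 := indVec {1, 2, 3, 4, 5, 6, 7, 8, 9, 10, 11, 12} with hw₁
  set w₂ : Fin 17 → ZMod 2 := indVec {1, 2, 3, 4, 5, 6, 7, 8, 13, 14, 15, 16} with hw₂
  set w₃ : Fin 17 → ZMod 2 := indVec {1, 2, 3, 4, 5, 9, 10, 11, 13, 14, 15, 17} with hw₃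
  have key : ∀ p : Pat, Fintype.card {k : Fin 17 // pat v₁ v₂ v₃ k = p} = n p := by
    intro p
    rw [Fintype.card_subtype]
    exact hn p
  have hPat : ∀ q : Pat, q = (0,0,0) ∨ q = (0,0,1) ∨ q = (0,1,0) ∨ q = (0,1,1) ∨
      q = (1,0,0) ∨ q = (1,0,1) ∨ q = (1,1,0) ∨ q = (1,1,1) := by decide
  have hcards : ∀ p : Pat, Fintype.card {k : Fin 17 // pat w₁ w₂ w₃ k = p}
      = Fintype.card {k : Fin 17 // pat v₁ v₂ v₃ k = p} := by
    intro p
    rw [key]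
    rcases hPat p with rfl | rfl | rfl | rfl | rfl | rfl | rfl | rfl <;>
      simp only [c0, gA, gB, gC, gD, gE, gF, gG] <;>
      rw [hw₁, hw₂, hw₃] <;> decide
  let π : Equiv.Perm (Fin 17) :=
    Equiv.ofFiberEquiv (f := pat w₁ w₂ w₃) (g := pat v₁ v₂ v₃)
      (fun p => Fintype.equivOfCardEq (hcards p))
  have hπ : ∀ k, pat v₁ v₂ v₃ (π k) = pat w₁ w₂ w₃ k :=
    fun k => Equiv.ofFiberEquiv_map _ k
  have e₁ : permMap π v₁ = w₁ := funext fun k => congrArg (fun p : Pat => p.1) (hπ k)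
  have e₂ : permMap π v₂ = w₂ := funext fun k => congrArg (fun p : Pat => p.2.1) (hπ k)
  have e₃ : permMap π v₃ = w₃ := funext fun k => congrArg (fun p : Pat => p.2.2) (hπ k)
  refine ⟨π, ?_⟩
  rw [Submodule.map_span]
  congr 1
  rw [Set.image_insert_eq, Set.image_insert_eq, Set.image_singleton, e₁, e₂, e₃]
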